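/- Suppose A + λ̂B ≻ 0 and let λ̄ = sup{λ : A + λB ⪰ 0} be finite. Then for every nonzero v ∈ Null(A + λ̄B), one has vᵀBv < 0. Similarly, if λ̲ = inf{λ : A + λB ⪰ 0} is finite, then vᵀBv > 0 for every nonzero v ∈ Null(A + λ̲B). -/

import Mathlib

open Matrix

theorem stmt4 {n : ℕ} (A B : Matrix (Fin n) (Fin n) ℝ)
    (hA : A.IsSymm) (hB : B.IsSymm)
    (l : ℝ) (hl : (A + l • B).PosDef) :
    (BddAbove {t : ℝ | (A + t • B).PosSemidef} →
      ∀ v : Fin n → ℝ, v ≠ 0 →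
        (A + sSup {t : ℝ | (A + t • B).PosSemidef} • B).mulVec v = 0 →
        v ⬝ᵥ B.mulVec v < 0) ∧
    (BddBelow {t : ℝ | (A + t • B).PosSemidef} →
      ∀ v : Fin n → ℝ, v ≠ 0 →
        (A + sInf {t : ℝ | (A + t • B).PosSemidef} • B).mulVec v = 0 →
        0 < v ⬝ᵥ B.mulVec v) := by
  have hlS : l ∈ {t : ℝ | (A + t • B).PosSemidef} := hl.posSemidef
  have hq : ∀ t : ℝ, ∀ v : Fin n → ℝ,
      v ⬝ᵥ (A + t • B).mulVec v = v ⬝ᵥ A.mulVec v + t * (v ⬝ᵥ B.mulVec v) := by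
    intro t v
    rw [add_mulVec, smul_mulVec, dotProduct_add, dotProduct_smul, smul_eq_mul]
  constructor
  · intro hbdd v hv hker
    have hle : l ≤ sSup {t : ℝ | (A + t • B).PosSemidef} := le_csSup hbdd hlS
    have h0 : v ⬝ᵥ A.mulVec v + sSup {t : ℝ | (A + t • B).PosSemidef} * (v ⬝ᵥ B.mulVec v) = 0 := by
      rw [← hq, hker, dotProduct_zero]
    have hpos : 0 < v ⬝ᵥ A.mulVec v + l * (v ⬝ᵥ B.mulVec v) := by
      have := hl.dotProduct_mulVec_pos hv
      simpa [hq] using this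
    by_contra hb
    push_neg at hb
    nlinarith [mul_nonneg (sub_nonneg.2 hle) hb]
  · intro hbdd v hv hker
    have hle : sInf {t : ℝ | (A + t • B).PosSemidef} ≤ l := csInf_le hbdd hlS
    have h0 : v ⬝ᵥ A.mulVec v + sInf {t : ℝ | (A + t • B).PosSemidef} * (v ⬝ᵥ B.mulVec v) = 0 := by
      rw [← hq, hker, dotProduct_zero]
    have hpos : 0 < v ⬝ᵥ A.mulVec v + l * (v ⬝ᵥ B.mulVec v) := by
      have := hl.dotProduct_mulVec_pos hv
      simpa [hq] using this
    by_contra hb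
    push_neg at hb
    nlinarith [mul_nonpos_of_nonneg_of_nonpos (sub_nonneg.2 hle) hb]
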